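/- arXiv:2208.02922 — 6 statements merged into one kernel-verified Lean document; each statement's English description precedes it below -/
import Mathlib

section
/- Let p ∈ (0,1), let r > 0, and let T > 1 be a real number. Define f(β) = (r + β)·(1 − (1−p)^{T/β})/p for β ∈ [1, T]. Then the minimum of f over [1, T] is attained at β = 1 or at β = T; moreover, setting ρ = (pT + (1−p)^T − 1)/(1 − p − (1−p)^T): if r < ρ then β = 1 is the unique minimizer; if r > ρ then β = T is the unique minimizer; and if r = ρ then both β = 1 and β = T are minimizers. -/
open Real Set

lemma ace_key_ineq {t : ℝ} (ht : 0 ≤ t) :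
    2*(1 - Real.exp (-t)) ≤ t*(1 + Real.exp (-t)) := by
  set F : ℝ → ℝ := fun s => s*(1 + Real.exp (-s)) - 2*(1 - Real.exp (-s)) with hF
  have hderiv : ∀ s : ℝ, HasDerivAt F (1 - Real.exp (-s) - s * Real.exp (-s)) s := by
    intro s
    have he : HasDerivAt (fun s : ℝ => Real.exp (-s)) (-Real.exp (-s)) s := by
      simpa using (hasDerivAt_neg s).exp
    have h1 : HasDerivAt (fun s : ℝ => s*(1 + Real.exp (-s)))
        (1 * (1 + Real.exp (-s)) + s * (-Real.exp (-s))) s :=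
      (hasDerivAt_id s).mul (he.const_add 1)
    have h2 : HasDerivAt (fun s : ℝ => 2*(1 - Real.exp (-s))) (2 * (-(-Real.exp (-s)))) s :=
      (he.const_sub 1).const_mul 2
    have := h1.sub h2
    refine this.congr_deriv ?_
    ring
  have hmono : Monotone F := by
    apply monotone_of_hasDerivAt_nonneg hderiv
    intro s
    have h1 := Real.add_one_le_exp s
    have h2 : Real.exp (-s) = (Real.exp s)⁻¹ := Real.exp_neg s
    have h3 : 0 < Real.exp s := Real.exp_pos s
    have h4 : (s + 1) * (Real.exp s)⁻¹ ≤ 1 := by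
      rw [← div_eq_mul_inv, div_le_one h3]; linarith
    have h5 : 0 < (Real.exp s)⁻¹ := inv_pos.mpr h3
    simp only [Pi.zero_apply]
    rw [h2]
    nlinarith
  have h0 : F 0 = 0 := by simp [hF]
  have := hmono ht
  rw [h0] at this
  simp only [hF] at this
  linarith

lemma ace_convex {c : ℝ} (hc : c < 0) :
    ConvexOn ℝ (Set.Ioi (0:ℝ)) (fun x => (1 - Real.exp (c / x))⁻¹) := by
  set B : ℝ → ℝ := fun x => (1 - Real.exp (c / x))⁻¹ with hBdef
  set B1 : ℝ → ℝ := fun x => -c * Real.exp (c/x) / (x^2 * (1 - Real.exp (c/x))^2) with hB1def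
  set B2 : ℝ → ℝ := fun x =>
    -c * Real.exp (c/x) * (-c*(1 + Real.exp (c/x)) - 2*x*(1 - Real.exp (c/x)))
      / (x^4 * (1 - Real.exp (c/x))^3) with hB2def
  have hApos : ∀ x : ℝ, 0 < x → 0 < 1 - Real.exp (c / x) := by
    intro x hx
    have : Real.exp (c / x) < 1 := Real.exp_lt_one_iff.mpr (div_neg_of_neg_of_pos hc hx)
    linarith
  have hinner : ∀ x : ℝ, 0 < x → HasDerivAt (fun y : ℝ => c / y) (-c/x^2) x := by
    intro x hx
    have h := (hasDerivAt_inv hx.ne').const_mul c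
    simp only [div_eq_mul_inv]
    refine h.congr_deriv ?_
    field_simp
  have hexp : ∀ x : ℝ, 0 < x →
      HasDerivAt (fun y : ℝ => Real.exp (c / y)) (Real.exp (c/x) * (-c/x^2)) x := by
    intro x hx
    exact (Real.hasDerivAt_exp (c/x)).comp x (hinner x hx)
  have hA' : ∀ x : ℝ, 0 < x →
      HasDerivAt (fun y : ℝ => 1 - Real.exp (c / y)) (-(Real.exp (c/x) * (-c/x^2))) x :=
    fun x hx => (hexp x hx).const_sub 1
  have hB : ∀ x : ℝ, 0 < x → HasDerivAt B (B1 x) x := by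
    intro x hx
    have h := (hA' x hx).inv (hApos x hx).ne'
    refine h.congr_deriv ?_
    rw [hB1def]
    have h1 : (1 - Real.exp (c/x)) ≠ 0 := (hApos x hx).ne'
    field_simp
  have hB1 : ∀ x : ℝ, 0 < x → HasDerivAt B1 (B2 x) x := by
    intro x hx
    have hAne : (1 - Real.exp (c/x)) ≠ 0 := (hApos x hx).ne'
    have hDne : x^2 * (1 - Real.exp (c/x))^2 ≠ 0 := by positivity
    -- numerator: fun y => -c * exp(c/y)
    have hN : HasDerivAt (fun y : ℝ => -c * Real.exp (c/y))
        (-c * (Real.exp (c/x) * (-c/x^2))) x := (hexp x hx).const_mul (-c)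
    -- denominator
    have hD : HasDerivAt (fun y : ℝ => y^2 * (1 - Real.exp (c/y))^2)
        ((2*x) * (1 - Real.exp (c/x))^2
          + x^2 * ((2 * (1 - Real.exp (c/x))) * (-(Real.exp (c/x) * (-c/x^2))))) x := by
      have hp2 : HasDerivAt (fun y : ℝ => y^2) (2*x) x := by
        simpa using hasDerivAt_pow 2 x
      have hq2 : HasDerivAt (fun y : ℝ => (1 - Real.exp (c/y))^2)
          ((2 * (1 - Real.exp (c/x))) * (-(Real.exp (c/x) * (-c/x^2)))) x := by
        have := (hA' x hx).pow 2
        refine this.congr_deriv ?_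
        ring
      exact hp2.mul hq2
    have h := hN.div hD hDne
    refine h.congr_deriv ?_
    rw [hB2def]
    field_simp
    ring
  have hBdiff : ∀ x ∈ Set.Ioi (0:ℝ), DifferentiableAt ℝ B x :=
    fun x hx => (hB x hx).differentiableAt
  have hderivB : ∀ x ∈ Set.Ioi (0:ℝ), deriv B x = B1 x := fun x hx => (hB x hx).deriv
  have hev : ∀ x ∈ Set.Ioi (0:ℝ), deriv B =ᶠ[nhds x] B1 := by
    intro x hx
    exact Filter.eventuallyEq_of_mem (isOpen_Ioi.mem_nhds hx) hderivB
  apply convexOn_of_deriv2_nonneg (convex_Ioi 0)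
  · exact fun x hx => (hBdiff x hx).continuousAt.continuousWithinAt
  · rw [interior_Ioi]
    exact fun x hx => (hBdiff x hx).differentiableWithinAt
  · rw [interior_Ioi]
    intro x hx
    exact (((hev x hx).differentiableAt_iff).mpr (hB1 x hx).differentiableAt).differentiableWithinAt
  · rw [interior_Ioi]
    intro x hx
    have h2 : deriv (deriv B) x = B2 x := by
      rw [(hev x hx).deriv_eq, (hB1 x hx).deriv]
    simp only [Function.iterate_succ, Function.iterate_zero, Function.comp_apply, Function.id_def]
    rw [show deriv (deriv B) x = B2 x from h2]
    -- nonnegativity of B2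
    rw [hB2def]
    have hx0 : (0:ℝ) < x := hx
    have hA := hApos x hx
    have hbr : 0 ≤ -c*(1 + Real.exp (c/x)) - 2*x*(1 - Real.exp (c/x)) := by
      have ht : 0 ≤ -c/x := div_nonneg (by linarith) hx0.le
      have hk := ace_key_ineq ht
      have hrw : -(-c/x) = c/x := by ring
      rw [hrw] at hk
      have := mul_le_mul_of_nonneg_left hk hx0.le
      have hxne : x ≠ 0 := hx0.ne'
      have h1 : x * (-c/x*(1 + Real.exp (c/x))) = -c*(1 + Real.exp (c/x)) := by
        field_simp
      rw [h1] at this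
      nlinarith
    have hnum : 0 ≤ -c * Real.exp (c/x) * (-c*(1 + Real.exp (c/x)) - 2*x*(1 - Real.exp (c/x))) := by
      have : 0 ≤ -c := by linarith
      positivity
    have hden : 0 < x^4 * (1 - Real.exp (c/x))^3 := by positivity
    positivity

set_option maxHeartbeats 1600000 in
/-- The minimum of the expected-cost function
`f β = (r + β) * (1 - (1-p)^(T/β)) / p` over `[1, T]` is attained at `β = 1` or
`β = T`; moreover, with `ρ = (p*T + (1-p)^T - 1) / (1 - p - (1-p)^T)`:
if `r < ρ` then `β = 1` is the unique minimizer, if `r > ρ` then `β = T` is the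
unique minimizer, and if `r = ρ` then both endpoints are minimizers. -/
theorem ace_optimal_interval (p r T : ℝ) (hp0 : 0 < p) (hp1 : p < 1)
    (hr : 0 < r) (hT : 1 < T)
    (f : ℝ → ℝ) (hf : ∀ β, f β = (r + β) * (1 - (1 - p) ^ (T / β)) / p)
    (ρ : ℝ) (hρ : ρ = (p * T + (1 - p) ^ T - 1) / (1 - p - (1 - p) ^ T)) :
    (∀ β ∈ Set.Icc (1 : ℝ) T, min (f 1) (f T) ≤ f β) ∧
    (r < ρ → ∀ β ∈ Set.Icc (1 : ℝ) T, β ≠ 1 → f 1 < f β) ∧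
    (ρ < r → ∀ β ∈ Set.Icc (1 : ℝ) T, β ≠ T → f T < f β) ∧
    (r = ρ → f 1 = f T ∧ ∀ β ∈ Set.Icc (1 : ℝ) T, f 1 ≤ f β) := by
  have hq0 : (0:ℝ) < 1 - p := by linarith
  have hT0 : (0:ℝ) < T := by linarith
  have hT1 : (0:ℝ) < T - 1 := by linarith
  set c : ℝ := T * Real.log (1 - p) with hcdef
  have hc : c < 0 := mul_neg_of_pos_of_neg hT0 (Real.log_neg hq0 (by linarith))
  have hpow : ∀ β : ℝ, 0 < β → (1 - p) ^ (T / β) = Real.exp (c / β) := by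
    intro β hβ
    rw [Real.rpow_def_of_pos hq0]
    congr 1
    field_simp
    ring
  have hpowT : (1 - p) ^ (T : ℝ) = Real.exp c := by
    rw [Real.rpow_def_of_pos hq0]
    congr 1
    ring
  have hApos : ∀ x : ℝ, 0 < x → 0 < 1 - Real.exp (c / x) := by
    intro x hx
    have : Real.exp (c / x) < 1 := Real.exp_lt_one_iff.mpr (div_neg_of_neg_of_pos hc hx)
    linarith
  set a1 : ℝ := 1 - Real.exp c with ha1def
  have ha1pos : 0 < a1 := by
    have : Real.exp c < 1 := Real.exp_lt_one_iff.mpr hc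
    simp only [ha1def]; linarith
  have hAT : 1 - Real.exp (c / T) = p := by
    have : c / T = Real.log (1 - p) := by
      rw [hcdef]; field_simp
    rw [this, Real.exp_log hq0]
    ring
  have hD : 0 < a1 - p := by
    have h1 : c < c / T := by
      rw [lt_div_iff₀ hT0]
      nlinarith
    have h2 := Real.exp_lt_exp.mpr h1
    simp only [ha1def]
    linarith [hAT]
  have hρ' : ρ = (p*T - a1)/(a1 - p) := by
    rw [hρ, hpowT]
    congr 1 <;> (simp only [ha1def]; ring)
  have hρ2 : ρ * (a1 - p) = p * T - a1 := by
    rw [hρ']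
    field_simp
  have hf1 : f 1 = (r+1)*a1/p := by
    rw [hf, div_one, hpowT]
  have hfT : f T = r + T := by
    rw [hf, div_self hT0.ne', Real.rpow_one]
    field_simp
    ring
  have hconv := ace_convex hc
  -- core facts for each β in [1, T]
  have core : ∀ β ∈ Set.Icc (1:ℝ) T, (0 < β) ∧
      (f β = (r+β)*(1 - Real.exp (c/β))/p) ∧
      ρ*(a1 - (1 - Real.exp (c/β))) ≤ β*(1 - Real.exp (c/β)) - a1 ∧
      p*T - β*(1 - Real.exp (c/β)) ≤ ρ*((1 - Real.exp (c/β)) - p) ∧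
      (1 - Real.exp (c/β)) ≤ a1 ∧ p ≤ (1 - Real.exp (c/β)) ∧
      (1 < β → (1 - Real.exp (c/β)) < a1) ∧ (β < T → p < (1 - Real.exp (c/β))) := by
    intro β hβ
    obtain ⟨hβ1, hβT⟩ := hβ
    have hβ0 : (0:ℝ) < β := by linarith
    set ab : ℝ := 1 - Real.exp (c/β) with habdef
    have habpos : 0 < ab := hApos β hβ0
    -- monotonicity facts
    have hle1 : ab ≤ a1 := by
      have h1 : c ≤ c / β := by
        rw [le_div_iff₀ hβ0]; nlinarith
      have := Real.exp_le_exp.mpr h1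
      simp only [habdef, ha1def]; linarith
    have hlt1 : 1 < β → ab < a1 := by
      intro h
      have h1 : c < c / β := by
        rw [lt_div_iff₀ hβ0]; nlinarith
      have := Real.exp_lt_exp.mpr h1
      simp only [habdef, ha1def]; linarith
    have hgeT : p ≤ ab := by
      have h1 : c / β ≤ c / T := by
        rw [div_le_div_iff₀ hβ0 hT0]; nlinarith
      have := Real.exp_le_exp.mpr h1
      simp only [habdef]; linarith [hAT]
    have hgtT : β < T → p < ab := by
      intro h
      have h1 : c / β < c / T := by
        rw [div_lt_div_iff₀ hβ0 hT0]; nlinarith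
      have := Real.exp_lt_exp.mpr h1
      simp only [habdef]; linarith [hAT]
    -- chord inequality (star)
    have star : p*((T-1)*a1 - (T-β)*ab) ≤ (β-1)*(a1*ab) := by
      have ha : 0 ≤ (T-β)/(T-1) := div_nonneg (by linarith) hT1.le
      have hb : 0 ≤ (β-1)/(T-1) := div_nonneg (by linarith) hT1.le
      have hab : (T-β)/(T-1) + (β-1)/(T-1) = 1 := by
        field_simp
        ring
      have hchord := hconv.2 (Set.mem_Ioi.mpr one_pos) (Set.mem_Ioi.mpr hT0) ha hb hab
      simp only [smul_eq_mul] at hchord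
      have hcomb : (T-β)/(T-1) * 1 + (β-1)/(T-1) * T = β := by
        field_simp
        ring
      rw [hcomb, div_one, hAT] at hchord
      -- hchord : ab⁻¹ ≤ (T-β)/(T-1) * a1⁻¹ + (β-1)/(T-1) * p⁻¹
      have hMpos : (0:ℝ) ≤ (T-1)*(a1*(ab*p)) := by positivity
      have hmul := mul_le_mul_of_nonneg_right hchord hMpos
      have l1 : ab⁻¹ * ((T-1)*(a1*(ab*p))) = (T-1)*(a1*p) := by
        field_simp
      have l2 : ((T-β)/(T-1) * a1⁻¹ + (β-1)/(T-1) * p⁻¹) * ((T-1)*(a1*(ab*p)))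
          = (T-β)*(ab*p) + (β-1)*(a1*ab) := by
        field_simp
      rw [l1, l2] at hmul
      linarith
    have key1 : (β*ab - a1 - ρ*(a1 - ab)) * (a1 - p)
        = (β-1)*(a1*ab) - p*((T-1)*a1 - (T-β)*ab) := by
      linear_combination (ab - a1) * hρ2
    have key2 : (ρ*(ab - p) - (p*T - β*ab)) * (a1 - p)
        = (β-1)*(a1*ab) - p*((T-1)*a1 - (T-β)*ab) := by
      linear_combination (ab - p) * hρ2
    have hL1 : ρ*(a1 - ab) ≤ β*ab - a1 := by
      have hS : 0 ≤ (β*ab - a1 - ρ*(a1 - ab)) * (a1 - p) := by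
        rw [key1]; linarith
      have := (mul_nonneg_iff_of_pos_right hD).mp hS
      linarith
    have hL2 : p*T - β*ab ≤ ρ*(ab - p) := by
      have hS : 0 ≤ (ρ*(ab - p) - (p*T - β*ab)) * (a1 - p) := by
        rw [key2]; linarith
      have := (mul_nonneg_iff_of_pos_right hD).mp hS
      linarith
    exact ⟨hβ0, by rw [hf, hpow β hβ0], hL1, hL2, hle1, hgeT, hlt1, hgtT⟩
  refine ⟨?_, ?_, ?_, ?_⟩
  · -- min ≤ f β
    intro β hβ
    obtain ⟨hβ0, hfβ, hL1, hL2, hle1, hgeT, -, -⟩ := core β hβ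
    rcases le_total r ρ with h | h
    · refine le_trans (min_le_left _ _) ?_
      rw [hf1, hfβ, div_le_div_iff_of_pos_right hp0]
      have := mul_le_mul_of_nonneg_right h (by linarith : 0 ≤ a1 - (1 - Real.exp (c/β)))
      linarith
    · refine le_trans (min_le_right _ _) ?_
      rw [hfT, hfβ, le_div_iff₀ hp0]
      have := mul_le_mul_of_nonneg_right h (by linarith : 0 ≤ (1 - Real.exp (c/β)) - p)
      linarith
  · -- r < ρ : unique minimizer at 1
    intro hrρ β hβ hβne
    obtain ⟨hβ0, hfβ, hL1, hL2, hle1, hgeT, hlt1, -⟩ := core β hβ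
    have hβgt1 : 1 < β := lt_of_le_of_ne hβ.1 (Ne.symm hβne)
    have hablt := hlt1 hβgt1
    rw [hf1, hfβ, div_lt_div_iff_of_pos_right hp0]
    have := mul_lt_mul_of_pos_right hrρ (by linarith : 0 < a1 - (1 - Real.exp (c/β)))
    linarith
  · -- ρ < r : unique minimizer at T
    intro hρr β hβ hβne
    obtain ⟨hβ0, hfβ, hL1, hL2, hle1, hgeT, -, hgtT⟩ := core β hβ
    have hβltT : β < T := lt_of_le_of_ne hβ.2 hβne
    have habgt := hgtT hβltT
    rw [hfT, hfβ, lt_div_iff₀ hp0]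
    have := mul_lt_mul_of_pos_right hρr (by linarith : 0 < (1 - Real.exp (c/β)) - p)
    linarith
  · -- r = ρ
    intro hrρ
    constructor
    · rw [hf1, hfT, div_eq_iff hp0.ne']
      rw [hrρ]
      linear_combination hρ2
    · intro β hβ
      obtain ⟨hβ0, hfβ, hL1, hL2, hle1, hgeT, -, -⟩ := core β hβ
      rw [hf1, hfβ, div_le_div_iff_of_pos_right hp0]
      have := mul_le_mul_of_nonneg_right hrρ.le (by linarith : 0 ≤ a1 - (1 - Real.exp (c/β)))
      linarith
end

section
/- Let p ∈ (0,1), let r > 0, and let T > 1 be a real number. Define f(β) = (r + β)·(1 − (1−p)^{T/β})/p for β ∈ [1, T]. Then for every β ∈ [1, T], f(β) ≥ min(f(1), f(T)); that is, the minimum of f over the interval [1, T] is attained at one of the two endpoints β = 1 or β = T. -/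
open Real Set

/-- Key inequality: `(2 - u) * exp u < 2 + u` for `u > 0`. -/
private lemma ace_key_exp {u : ℝ} (hu : 0 < u) : (2 - u) * Real.exp u < 2 + u := by
  have hH : ∀ x : ℝ, HasDerivAt (fun y : ℝ => 2 + y - (2 - y) * Real.exp y)
      (1 - (1 - x) * Real.exp x) x := by
    intro x
    have h1 : HasDerivAt (fun y : ℝ => (2 - y) * Real.exp y)
        ((-1) * Real.exp x + (2 - x) * Real.exp x) x :=
      (((hasDerivAt_id x).const_sub 2)).mul (Real.hasDerivAt_exp x)
    have h2 : HasDerivAt (fun y : ℝ => 2 + y) 1 x := by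
      simpa using (hasDerivAt_id x).const_add 2
    have := h2.sub h1
    refine this.congr_deriv ?_
    ring
  have mono : StrictMonoOn (fun y : ℝ => 2 + y - (2 - y) * Real.exp y) (Ici 0) := by
    apply strictMonoOn_of_deriv_pos (convex_Ici 0)
    · exact fun x _ => (hH x).differentiableAt.continuousAt.continuousWithinAt
    · intro x hx
      rw [interior_Ici] at hx
      rw [(hH x).deriv]
      rcases le_or_gt 1 x with h1 | h1
      · nlinarith [Real.exp_pos x]
      · have h2 : -x + 1 < Real.exp (-x) := Real.add_one_lt_exp (neg_ne_zero.mpr (ne_of_gt hx))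
        have h3 : Real.exp (-x) * Real.exp x = 1 := by
          rw [← Real.exp_add]; simp
        nlinarith [Real.exp_pos x]
  have := mono self_mem_Ici (mem_Ici.2 hu.le) hu
  simp only [Real.exp_zero] at this
  nlinarith

/-- The function `g` and its first two derivatives. -/
private noncomputable def aceG (r a : ℝ) : ℝ → ℝ :=
  fun x => (r + x) * (1 - Real.exp (-(a / x)))

private noncomputable def aceG' (r a : ℝ) : ℝ → ℝ :=
  fun x => (1 - Real.exp (-(a / x))) - (r + x) * (a / x ^ 2) * Real.exp (-(a / x))

private noncomputable def aceG'' (r a : ℝ) : ℝ → ℝ :=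
  fun x => Real.exp (-(a / x)) * (a / x ^ 4) * (2 * r * x - a * (r + x))

private lemma aceExpDeriv (a : ℝ) {x : ℝ} (hx : 0 < x) :
    HasDerivAt (fun y : ℝ => Real.exp (-(a / y))) (Real.exp (-(a / x)) * (a / x ^ 2)) x := by
  have h0 : HasDerivAt (fun y : ℝ => a / y) (a * -(x ^ 2)⁻¹) x :=
    (hasDerivAt_inv hx.ne').const_mul a
  have := (h0.neg).exp
  refine this.congr_deriv ?_
  simp only [Pi.neg_apply]
  field_simp

private lemma aceG_hasDeriv (r a : ℝ) {x : ℝ} (hx : 0 < x) :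
    HasDerivAt (aceG r a) (aceG' r a x) x := by
  have h1 : HasDerivAt (fun y : ℝ => r + y) 1 x := by
    simpa using (hasDerivAt_id x).const_add r
  have h2 : HasDerivAt (fun y : ℝ => 1 - Real.exp (-(a / y)))
      (-(Real.exp (-(a / x)) * (a / x ^ 2))) x := (aceExpDeriv a hx).const_sub 1
  have := h1.mul h2
  refine this.congr_deriv ?_
  simp only [aceG']
  ring

private lemma aceG'_hasDeriv (r a : ℝ) {x : ℝ} (hx : 0 < x) :
    HasDerivAt (aceG' r a) (aceG'' r a x) x := by
  have hE := aceExpDeriv a hx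
  have hq : HasDerivAt (fun y : ℝ => a / y ^ 2) (a * (-(2 * x ^ 1) / (x ^ 2) ^ 2)) x := by
    exact ((hasDerivAt_pow 2 x).inv (by positivity)).const_mul a
  have h1 : HasDerivAt (fun y : ℝ => r + y) 1 x := by
    simpa using (hasDerivAt_id x).const_add r
  have hm : HasDerivAt (fun y : ℝ => (r + y) * (a / y ^ 2))
      (1 * (a / x ^ 2) + (r + x) * (a * (-(2 * x ^ 1) / (x ^ 2) ^ 2))) x := h1.mul hq
  have hprod := hm.mul hE
  have hfirst : HasDerivAt (fun y : ℝ => 1 - Real.exp (-(a / y)))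
      (-(Real.exp (-(a / x)) * (a / x ^ 2))) x := (aceExpDeriv a hx).const_sub 1
  have := hfirst.sub hprod
  refine this.congr_deriv ?_
  simp only [aceG'']
  have hx2 : (x : ℝ) ≠ 0 := hx.ne'
  field_simp
  ring

/-- Wherever `a * (r + x) ≤ 2 * r * x`, the derivative is negative. -/
private lemma aceG'_neg {r a x : ℝ} (hr : 0 < r) (ha : 0 < a) (hx : 0 < x)
    (hcond : a * (r + x) ≤ 2 * r * x) : aceG' r a x < 0 := by
  set u : ℝ := a / x with hu_def
  have hu : 0 < u := div_pos ha hx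
  have hux : u * x = a := div_mul_cancel₀ a hx.ne'
  have hu2 : u * (r + x) ≤ 2 * r := by
    rw [hu_def, div_mul_eq_mul_div, div_le_iff₀ hx]
    linarith [hcond]
  have hu2' : u < 2 := by nlinarith
  have hkey := ace_key_exp hu
  have hd : 0 ≤ Real.exp u - 1 - u := by linarith [Real.add_one_le_exp u]
  -- x * (exp u - 1 - u) < r * u
  have hchain : u * x ≤ r * (2 - u) := by nlinarith
  have hxd : x * (Real.exp u - 1 - u) < r * u := by
    nlinarith [mul_le_mul_of_nonneg_right hchain hd,
      mul_lt_mul_of_pos_left hkey hr]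
  set w : ℝ := a / x ^ 2 with hw_def
  have hwx : w * x = u := by
    rw [hw_def, hu_def]; field_simp
  have hw : 0 < w := by rw [hw_def]; positivity
  have hmain : Real.exp u - 1 < w * (r + x) := by
    -- exp u - 1 - u < r * u / x = r * w, and u = w * x
    nlinarith [mul_lt_mul_of_pos_left hxd hw]
  have hEn : Real.exp (-u) * Real.exp u = 1 := by rw [← Real.exp_add]; simp
  have hgoal : (1 - Real.exp (-u)) - (r + x) * w * Real.exp (-u) < 0 := by
    nlinarith [mul_lt_mul_of_pos_right hmain (Real.exp_pos (-u)), Real.exp_pos (-u)]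
  simpa [aceG', hu_def, hw_def, mul_comm, mul_assoc, mul_left_comm] using hgoal

/-- `aceG` is antitone on `[t, T']` if the derivative condition holds on the interior. -/
private lemma aceG_antitoneOn {r a t T' : ℝ} (hr : 0 < r) (ha : 0 < a) (ht : 0 < t)
    (hcond : ∀ x ∈ Ioo t T', a * (r + x) ≤ 2 * r * x) :
    AntitoneOn (aceG r a) (Icc t T') := by
  apply antitoneOn_of_deriv_nonpos (convex_Icc t T')
  · intro x hx
    exact (aceG_hasDeriv r a (lt_of_lt_of_le ht hx.1)).differentiableAt.continuousAt.continuousWithinAt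
  · intro x hx
    rw [interior_Icc] at hx
    exact (aceG_hasDeriv r a (lt_trans ht hx.1)).differentiableAt.differentiableWithinAt
  · intro x hx
    rw [interior_Icc] at hx
    rw [(aceG_hasDeriv r a (lt_trans ht hx.1)).deriv]
    exact (aceG'_neg hr ha (lt_trans ht hx.1) (hcond x hx)).le

/-- `aceG` is concave on `[1, t]` if the second-derivative condition holds on the interior. -/
private lemma aceG_concaveOn {r a t : ℝ} (hr : 0 < r) (ha : 0 < a)
    (hcond : ∀ x ∈ Ioo (1 : ℝ) t, 2 * r * x ≤ a * (r + x)) :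
    ConcaveOn ℝ (Icc (1 : ℝ) t) (aceG r a) := by
  apply concaveOn_of_hasDerivWithinAt2_nonpos (convex_Icc 1 t)
      (f' := aceG' r a) (f'' := aceG'' r a)
  · intro x hx
    exact (aceG_hasDeriv r a (lt_of_lt_of_le one_pos hx.1)).differentiableAt.continuousAt.continuousWithinAt
  · intro x hx
    rw [interior_Icc] at hx
    exact (aceG_hasDeriv r a (lt_trans one_pos hx.1)).hasDerivWithinAt
  · intro x hx
    rw [interior_Icc] at hx
    exact (aceG'_hasDeriv r a (lt_trans one_pos hx.1)).hasDerivWithinAt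
  · intro x hx
    rw [interior_Icc] at hx
    have hx0 : (0 : ℝ) < x := lt_trans one_pos hx.1
    have h5 : 2 * r * x - a * (r + x) ≤ 0 := by linarith [hcond x hx]
    have h4 : 0 ≤ Real.exp (-(a / x)) * (a / x ^ 4) := by positivity
    exact mul_nonpos_of_nonneg_of_nonpos h4 h5

/-- The minimum of `f β = (r + β) * (1 - (1-p)^(T/β)) / p` over the interval
`[1, T]` is attained at one of the endpoints `β = 1` or `β = T`. -/
theorem ace_min_at_endpoints (p r T : ℝ) (hp0 : 0 < p) (hp1 : p < 1)
    (hr : 0 < r) (hT : 1 < T)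
    (f : ℝ → ℝ) (hf : ∀ β, f β = (r + β) * (1 - (1 - p) ^ (T / β)) / p) :
    ∀ β ∈ Set.Icc (1 : ℝ) T, min (f 1) (f T) ≤ f β := by
  intro β hβmem
  obtain ⟨hβ1, hβT⟩ := hβmem
  have h1p : (0 : ℝ) < 1 - p := by linarith
  set a : ℝ := -(T * Real.log (1 - p)) with ha_def
  have hlog : Real.log (1 - p) < 0 := Real.log_neg h1p (by linarith)
  have hT0 : (0 : ℝ) < T := by linarith
  have ha : 0 < a := by rw [ha_def]; nlinarith
  have hβ0 : 0 < β := lt_of_lt_of_le one_pos hβ1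
  have hfg : ∀ x : ℝ, 0 < x → f x = aceG r a x / p := by
    intro x hx
    rw [hf x]
    have hpow : (1 - p) ^ (T / x) = Real.exp (-(a / x)) := by
      rw [Real.rpow_def_of_pos h1p]
      congr 1
      rw [ha_def]
      field_simp
    rw [hpow]
    rfl
  rw [hfg 1 one_pos, hfg T hT0, hfg β hβ0, min_div_div_right hp0.le]
  gcongr
  -- goal: min (aceG r a 1) (aceG r a T) ≤ aceG r a β
  by_cases hcase : a * (r + β) ≤ 2 * r * β
  · -- g is decreasing on [β, T]
    have h2r : a < 2 * r := by nlinarith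
    have hanti : AntitoneOn (aceG r a) (Icc β T) := by
      apply aceG_antitoneOn hr ha hβ0
      intro x hx
      nlinarith [hx.1]
    have hle : aceG r a T ≤ aceG r a β :=
      hanti (left_mem_Icc.2 hβT) (right_mem_Icc.2 hβT) hβT
    exact le_trans (min_le_right _ _) hle
  · push_neg at hcase
    set t : ℝ := if a < 2 * r then min T (a * r / (2 * r - a)) else T with ht_def
    have htT : t ≤ T := by
      rw [ht_def]; split_ifs
      · exact min_le_left _ _
      · exact le_rfl
    have hβt : β ≤ t := by
      rw [ht_def]; split_ifs with h2r
      · refine le_min hβT ?_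
        rw [le_div_iff₀ (by linarith : (0:ℝ) < 2 * r - a)]
        nlinarith
      · exact hβT
    have h1t : (1 : ℝ) ≤ t := le_trans hβ1 hβt
    -- concave on [1, t]
    have hconc : ConcaveOn ℝ (Icc (1 : ℝ) t) (aceG r a) := by
      apply aceG_concaveOn hr ha
      intro x hx
      have hxt : x < t := hx.2
      have hx1 : (1 : ℝ) < x := hx.1
      rw [ht_def] at hxt
      by_cases h2r : a < 2 * r
      · rw [if_pos h2r] at hxt
        have := lt_of_lt_of_le hxt (min_le_right T _)
        rw [lt_div_iff₀ (by linarith : (0:ℝ) < 2 * r - a)] at this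
        nlinarith
      · push_neg at h2r
        nlinarith
    -- antitone on [t, T]
    have hanti : AntitoneOn (aceG r a) (Icc t T) := by
      apply aceG_antitoneOn hr ha (lt_of_lt_of_le one_pos h1t)
      intro x hx
      have hxt : t < x := hx.1
      have hxT : x < T := hx.2
      rw [ht_def] at hxt
      by_cases h2r : a < 2 * r
      · rw [if_pos h2r] at hxt
        have hm : min T (a * r / (2 * r - a)) = a * r / (2 * r - a) := by
          rcases min_cases T (a * r / (2 * r - a)) with ⟨h, _⟩ | ⟨h, _⟩
          · exfalso; rw [h] at hxt; linarith
          · exact h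
        rw [hm, div_lt_iff₀ (by linarith : (0:ℝ) < 2 * r - a)] at hxt
        nlinarith
      · rw [if_neg h2r] at hxt
        exfalso; linarith
    have hGt : aceG r a T ≤ aceG r a t :=
      hanti (left_mem_Icc.2 htT) (right_mem_Icc.2 htT) htT
    have hβIcc : β ∈ Icc (1 : ℝ) t := ⟨hβ1, hβt⟩
    -- concavity gives min at endpoints of [1, t]
    have hseg : β ∈ segment ℝ (1 : ℝ) t := by
      rw [segment_eq_Icc h1t]; exact hβIcc
    obtain ⟨c, d, hc, hd, hcd, hx⟩ := hseg
    have hcc := hconc.2 (left_mem_Icc.2 h1t) (right_mem_Icc.2 h1t) hc hd hcd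
    rw [hx] at hcc
    simp only [smul_eq_mul] at hcc
    have hmin1 : min (aceG r a 1) (aceG r a t) ≤ aceG r a β := by
      have m1 := mul_le_mul_of_nonneg_left (min_le_left (aceG r a 1) (aceG r a t)) hc
      have m2 := mul_le_mul_of_nonneg_left (min_le_right (aceG r a 1) (aceG r a t)) hd
      have m3 : c * min (aceG r a 1) (aceG r a t) + d * min (aceG r a 1) (aceG r a t)
          = min (aceG r a 1) (aceG r a t) := by
        rw [← add_mul, hcd, one_mul]
      linarith
    calc min (aceG r a 1) (aceG r a T) ≤ min (aceG r a 1) (aceG r a t) :=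
          min_le_min le_rfl hGt
      _ ≤ aceG r a β := hmin1
end

section
/- Let p ∈ (0,1), let r > 0, and let T > 1 be a real number. Define f(β) = (r + β)·(1 − (1−p)^{T/β})/p and set ρ = (pT + (1−p)^T − 1)/(1 − p − (1−p)^T). Then f(1) < f(T) if and only if r < ρ; equivalently, (r+1)·(1 − (1−p)^T) < (r+T)·p if and only if r < ρ. Likewise, f(1) = f(T) if and only if r = ρ, and f(1) > f(T) if and only if r > ρ. -/
/-- Comparison of the endpoint values of `f β = (r + β)*(1 - (1-p)^(T/β))/p`:
with `ρ = (p*T + (1-p)^T - 1)/(1 - p - (1-p)^T)`, we have `f 1 < f T ↔ r < ρ`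
(equivalently `(r+1)*(1-(1-p)^T) < (r+T)*p ↔ r < ρ`), `f 1 = f T ↔ r = ρ`, and
`f 1 > f T ↔ r > ρ`. -/
theorem ace_endpoint_comparison (p r T : ℝ) (hp0 : 0 < p) (hp1 : p < 1)
    (hr : 0 < r) (hT : 1 < T)
    (f : ℝ → ℝ) (hf : ∀ β, f β = (r + β) * (1 - (1 - p) ^ (T / β)) / p)
    (ρ : ℝ) (hρ : ρ = (p * T + (1 - p) ^ T - 1) / (1 - p - (1 - p) ^ T)) :
    (f 1 < f T ↔ r < ρ) ∧
    ((r + 1) * (1 - (1 - p) ^ T) < (r + T) * p ↔ r < ρ) ∧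
    (f 1 = f T ↔ r = ρ) ∧
    (f T < f 1 ↔ ρ < r) := by
  have hT0 : (0:ℝ) < T := by linarith
  have hq0 : (0:ℝ) < 1 - p := by linarith
  have hq1 : (1:ℝ) - p < 1 := by linarith
  have hqT : (1 - p) ^ T < 1 - p := by
    calc (1 - p) ^ T < (1 - p) ^ (1:ℝ) :=
          Real.rpow_lt_rpow_of_exponent_gt hq0 hq1 hT
      _ = 1 - p := Real.rpow_one _
  set q := (1 - p) ^ T with hqdef
  have hD : 0 < 1 - p - q := by linarith
  have hρ' : ρ = (p * T + q - 1) / (1 - p - q) := hρ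
  have hf1 : f 1 = (r + 1) * (1 - q) / p := by
    rw [hf]; norm_num; rfl
  have hfT : f T = r + T := by
    rw [hf, div_self hT0.ne', Real.rpow_one]
    have h1 : 1 - (1 - p) = p := by ring
    rw [h1, mul_div_assoc, div_self hp0.ne', mul_one]
  refine ⟨?_, ?_, ?_, ?_⟩
  · rw [hf1, hfT, hρ', div_lt_iff₀ hp0, lt_div_iff₀ hD]
    constructor <;> intro h <;> nlinarith
  · rw [hρ', lt_div_iff₀ hD]
    constructor <;> intro h <;> nlinarith
  · rw [hf1, hfT, hρ', div_eq_iff hp0.ne', eq_div_iff hD.ne']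
    constructor <;> intro h <;> nlinarith
  · rw [hf1, hfT, hρ', lt_div_iff₀ hp0, div_lt_iff₀ hD]
    constructor <;> intro h <;> nlinarith
end

section
/- Let s > 1 be a real number and define g(β) = −(β·ln s − β²·s^{1/β} + β²)/ln s for β > 0. Then g is strictly decreasing on (0, ∞); in particular its derivative satisfies g′(β) = ((2·s^{1/β} − 2)·β − s^{1/β}·ln s − ln s)/ln s < 0 for all β > 0. -/
/-- For `s > 1`, the function `g β = -(β * log s - β^2 * s^(1/β) + β^2)/log s`
is strictly decreasing on `(0, ∞)`; in particular its derivative equals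
`((2*s^(1/β) - 2)*β - s^(1/β)*log s - log s)/log s`, which is negative for all
`β > 0`. -/
theorem ace_g_strict_anti (s : ℝ) (hs : 1 < s)
    (g : ℝ → ℝ)
    (hg : ∀ β, g β =
      -(β * Real.log s - β ^ 2 * s ^ (1 / β) + β ^ 2) / Real.log s) :
    StrictAntiOn g (Set.Ioi (0 : ℝ)) ∧
    ∀ β : ℝ, 0 < β →
      deriv g β =
        ((2 * s ^ (1 / β) - 2) * β - s ^ (1 / β) * Real.log s - Real.log s) /
          Real.log s ∧
      deriv g β < 0 := by
  have hs0 : (0:ℝ) < s := lt_trans one_pos hs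
  set L := Real.log s with hLdef
  have hL : 0 < L := Real.log_pos hs
  -- rewrite g in exp form
  have hgF : g = fun β : ℝ =>
      -(β * L - β ^ 2 * Real.exp (L * β⁻¹) + β ^ 2) / L := by
    funext β
    rw [hg, Real.rpow_def_of_pos hs0, one_div]
  -- key inequality: x (e^x + 1) > 2(e^x - 1) for x > 0
  have key : ∀ x : ℝ, 0 < x →
      0 < (Real.exp x + 1) * x - (2 * Real.exp x - 2) := by
    intro x hx
    have hmono : StrictMonoOn
        (fun x : ℝ => (Real.exp x + 1) * x - (2 * Real.exp x - 2))
        (Set.Ici (0:ℝ)) := by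
      apply strictMonoOn_of_deriv_pos (convex_Ici 0)
      · fun_prop
      · intro y hy
        rw [interior_Ici] at hy
        have hy0 : (0:ℝ) < y := hy
        have hd : HasDerivAt
            (fun x : ℝ => (Real.exp x + 1) * x - (2 * Real.exp x - 2))
            ((Real.exp y + 1) * 1 + Real.exp y * y - 2 * Real.exp y) y := by
          have h1 := (((Real.hasDerivAt_exp y).add_const 1).mul
            (hasDerivAt_id y)).sub (((Real.hasDerivAt_exp y).const_mul 2).sub_const 2)
          refine h1.congr_deriv ?_
          simp [mul_comm]
          ring
        rw [hd.deriv]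
        have h1 : -y + 1 < Real.exp (-y) :=
          Real.add_one_lt_exp (neg_ne_zero.mpr (ne_of_gt hy0))
        have h2 : (1 - y) * Real.exp y < 1 := by
          have := mul_lt_mul_of_pos_right h1 (Real.exp_pos y)
          rw [← Real.exp_add, neg_add_cancel, Real.exp_zero] at this
          linarith [this]
          
        nlinarith [Real.exp_pos y]
    have h0 : (0:ℝ) ∈ Set.Ici (0:ℝ) := Set.mem_Ici.mpr le_rfl
    have hx' : x ∈ Set.Ici (0:ℝ) := Set.mem_Ici.mpr (le_of_lt hx)
    have := hmono h0 hx' hx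
    simpa using this
  -- derivative
  have hderiv : ∀ β : ℝ, 0 < β →
      HasDerivAt g
        (((2 * Real.exp (L * β⁻¹) - 2) * β - Real.exp (L * β⁻¹) * L - L) / L) β := by
    intro β hβ
    have hβ0 : β ≠ 0 := ne_of_gt hβ
    have hβ2 : β ^ 2 ≠ 0 := pow_ne_zero 2 hβ0
    have hi : HasDerivAt (fun x : ℝ => L * x⁻¹) (L * -(β ^ 2)⁻¹) β :=
      (hasDerivAt_inv hβ0).const_mul L
    have he : HasDerivAt (fun x : ℝ => Real.exp (L * x⁻¹))
        (Real.exp (L * β⁻¹) * (L * -(β ^ 2)⁻¹)) β := hi.exp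
    have hsq : HasDerivAt (fun x : ℝ => x ^ 2) (2 * β) β := by
      simpa using hasDerivAt_pow 2 β
    have hmul : HasDerivAt (fun x : ℝ => x ^ 2 * Real.exp (L * x⁻¹))
        (2 * β * Real.exp (L * β⁻¹)
          + β ^ 2 * (Real.exp (L * β⁻¹) * (L * -(β ^ 2)⁻¹))) β := hsq.mul he
    have hlin : HasDerivAt (fun x : ℝ => x * L) (1 * L) β :=
      (hasDerivAt_id β).mul_const L
    have htot := (((hlin.sub hmul).add hsq).neg).div_const L
    rw [hgF]
    refine htot.congr_deriv ?_
    field_simp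
    ring
  have hneg : ∀ β : ℝ, 0 < β →
      ((2 * Real.exp (L * β⁻¹) - 2) * β - Real.exp (L * β⁻¹) * L - L) / L < 0 := by
    intro β hβ
    apply div_neg_of_neg_of_pos _ hL
    set x := L * β⁻¹ with hx
    have hx0 : 0 < x := by positivity
    have hLx : L = x * β := by
      rw [hx, mul_assoc, inv_mul_cancel₀ hβ.ne', mul_one]
    have hk := key x hx0
    calc (2 * Real.exp x - 2) * β - Real.exp x * L - L
        = -(((Real.exp x + 1) * x - (2 * Real.exp x - 2)) * β) := by
          rw [hLx]; ring
      _ < 0 := by nlinarith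
  refine ⟨?_, fun β hβ => ?_⟩
  · apply strictAntiOn_of_deriv_neg (convex_Ioi 0)
    · intro β hβ
      exact ((hderiv β hβ).continuousAt).continuousWithinAt
    · intro β hβ
      rw [interior_Ioi] at hβ
      rw [(hderiv β hβ).deriv]
      exact hneg β hβ
  · have hEq : s ^ (1/β) = Real.exp (L * β⁻¹) := by
      rw [Real.rpow_def_of_pos hs0, one_div]
    rw [(hderiv β hβ).deriv, hEq]
    exact ⟨rfl, hneg β hβ⟩
end

section
/- Let β > 0 be a real number and define h(s) = (2·s^{1/β} − 2)·β − s^{1/β}·ln s − ln s for s ≥ 1. Then h(1) = 0 and h(s) < 0 for every s > 1. -/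
open Real

/-- Key inequality: for `t > 1`, `2*(t-1) < (t+1)*log t`. -/
lemma ace_key (t : ℝ) (ht : 1 < t) : 2 * (t - 1) < (t + 1) * Real.log t := by
  set F : ℝ → ℝ := fun x => (x + 1) * Real.log x - 2 * (x - 1) with hF
  have hmono : StrictMonoOn F (Set.Ici (1 : ℝ)) := by
    apply strictMonoOn_of_deriv_pos (convex_Ici 1)
    · apply ContinuousOn.sub
      · exact (continuous_id.add continuous_const).continuousOn.mul
          (Real.continuousOn_log.mono (by intro x hx; simp at hx ⊢; linarith))
      · fun_prop
    · intro x hx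
      rw [interior_Ici] at hx
      have hx1 : (1 : ℝ) < x := hx
      have hx0 : (0 : ℝ) < x := by linarith
      have hd : HasDerivAt F (1 * Real.log x + (x + 1) * (1 / x) - 2 * 1) x := by
        have := (((hasDerivAt_id x).add_const 1).mul (Real.hasDerivAt_log hx0.ne')).sub
          (((hasDerivAt_id x).sub_const 1).const_mul 2)
        have e : F = (fun x => id x + 1) * Real.log - fun y => 2 * (id y - 1) := by
          ext y; simp [hF]
        rw [e, one_div]
        exact this
      rw [hd.deriv, one_div]
      have hlog : Real.log (1 / x) < 1 / x - 1 :=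
        Real.log_lt_sub_one_of_pos (by positivity) (by
          intro hcon
          rw [div_eq_one_iff_eq hx0.ne'] at hcon
          linarith)
      rw [one_div, Real.log_inv] at hlog
      have hxinv : 0 < 1 / x := by positivity
      have he : (x + 1) * x⁻¹ = 1 + x⁻¹ := by field_simp
      rw [he]
      linarith [hlog]
  have h1 : F 1 = 0 := by simp [hF]
  have := hmono (Set.self_mem_Ici) (Set.mem_Ici.mpr ht.le) ht
  rw [h1] at this
  simp only [hF] at this
  linarith

/-- For `β > 0` and `h s = (2*s^(1/β) - 2)*β - s^(1/β)*log s - log s`, we have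
`h 1 = 0` and `h s < 0` for every `s > 1`. -/
theorem ace_h_neg (β : ℝ) (hβ : 0 < β)
    (h : ℝ → ℝ)
    (hh : ∀ s, h s =
      (2 * s ^ (1 / β) - 2) * β - s ^ (1 / β) * Real.log s - Real.log s) :
    h 1 = 0 ∧ ∀ s : ℝ, 1 < s → h s < 0 := by
  constructor
  · rw [hh]; simp
  · intro s hs
    rw [hh]
    have hs0 : (0 : ℝ) < s := by linarith
    set t := s ^ (1 / β) with htdef
    have ht1 : 1 < t := Real.one_lt_rpow_iff_of_pos hs0 |>.mpr (Or.inl ⟨hs, by positivity⟩)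
    have hlogt : Real.log t = (1 / β) * Real.log s := Real.log_rpow hs0 _
    have hlogs : Real.log s = β * Real.log t := by
      rw [hlogt]; field_simp
    have hkey := ace_key t ht1
    rw [hlogs]
    nlinarith [hkey, hβ]
end

section
/- Let p ∈ (0,1), let r > 0, let T > 1 be a real number, set s = (1−p)^{−T} (so s > 1), and define f(β) = (r + β)·(1 − s^{−1/β})/p for β ∈ [1, T]. If there exists β₀ ∈ [1, T] with f′(β₀) = 0, then f is monotonically increasing on [1, β₀] and monotonically decreasing on [β₀, T]. -/
open Real Set

lemma ace_aux_h2 : ∀ x : ℝ, 0 < x → 0 < (x - 1) * Real.exp x + 1 := by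
  have h2 : StrictMonoOn (fun x : ℝ => (x - 1) * Real.exp x + 1) (Set.Ici 0) := by
    apply strictMonoOn_of_deriv_pos (convex_Ici 0)
    · fun_prop
    · intro x hx
      rw [interior_Ici] at hx
      have hd : HasDerivAt (fun x : ℝ => (x - 1) * Real.exp x + 1) (x * Real.exp x) x := by
        have := (((hasDerivAt_id x).sub_const 1).mul (Real.hasDerivAt_exp x)).add_const 1
        exact this.congr_deriv (by simp only [id]; ring)
      rw [hd.deriv]
      have hx' : (0:ℝ) < x := hx
      positivity
  intro x hx
  have := h2 (Set.self_mem_Ici) (Set.mem_Ici.mpr hx.le) hx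
  simpa using this

lemma ace_aux_h : ∀ x : ℝ, 0 < x → 0 < (x - 2) * Real.exp x + x + 2 := by
  have h1 : StrictMonoOn (fun x : ℝ => (x - 2) * Real.exp x + x + 2) (Set.Ici 0) := by
    apply strictMonoOn_of_deriv_pos (convex_Ici 0)
    · fun_prop
    · intro x hx
      rw [interior_Ici] at hx
      have hd : HasDerivAt (fun x : ℝ => (x - 2) * Real.exp x + x + 2)
          ((x - 1) * Real.exp x + 1) x := by
        have := ((((hasDerivAt_id x).sub_const 2).mul (Real.hasDerivAt_exp x)).add
          (hasDerivAt_id x)).add_const 2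
        exact this.congr_deriv (by simp only [id]; ring)
      rw [hd.deriv]
      exact ace_aux_h2 x hx
  intro x hx
  have := h1 (Set.self_mem_Ici) (Set.mem_Ici.mpr hx.le) hx
  simpa using this

lemma ace_aux_g_mono : StrictMonoOn (fun x : ℝ => (Real.exp x - 1 - x) / x ^ 2) (Set.Ioi 0) := by
  apply strictMonoOn_of_deriv_pos (convex_Ioi 0)
  · apply ContinuousOn.div (by fun_prop) (by fun_prop)
    intro x hx
    have : (0:ℝ) < x := hx
    positivity
  · intro x hx
    rw [interior_Ioi] at hx
    have hx0 : x ≠ 0 := ne_of_gt hx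
    have hN : HasDerivAt (fun x : ℝ => Real.exp x - 1 - x) (Real.exp x - 1) x := by
      have := ((Real.hasDerivAt_exp x).sub_const 1).sub (hasDerivAt_id x)
      exact this
    have hD : HasDerivAt (fun x : ℝ => x ^ 2) (2 * x) x := by
      simpa using hasDerivAt_pow 2 x
    have hd := hN.div hD (by positivity)
    rw [(show HasDerivAt (fun x : ℝ => (Real.exp x - 1 - x) / x ^ 2) _ x from hd).deriv]
    have hnum : (Real.exp x - 1) * x ^ 2 - (Real.exp x - 1 - x) * (2 * x)
        = x * ((x - 2) * Real.exp x + x + 2) := by ring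
    rw [hnum]
    exact div_pos (mul_pos hx (ace_aux_h x hx)) (by positivity)

/-- For `s = (1-p)^(-T) > 1` and `f β = (r + β)*(1 - s^(-1/β))/p` on `[1, T]`,
if `f′ β₀ = 0` for some `β₀ ∈ [1, T]`, then `f` is monotonically increasing on
`[1, β₀]` and monotonically decreasing on `[β₀, T]`. -/
theorem ace_unimodal (p r T s : ℝ) (hp0 : 0 < p) (hp1 : p < 1)
    (hr : 0 < r) (hT : 1 < T) (hs : s = (1 - p) ^ (-T))
    (f : ℝ → ℝ) (hf : ∀ β, f β = (r + β) * (1 - s ^ (-1 / β)) / p)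
    (β₀ : ℝ) (hβ₀ : β₀ ∈ Set.Icc (1 : ℝ) T) (hcrit : deriv f β₀ = 0) :
    MonotoneOn f (Set.Icc 1 β₀) ∧ AntitoneOn f (Set.Icc β₀ T) := by
  obtain ⟨hβ₀1, hβ₀T⟩ := hβ₀
  have h1p : (0:ℝ) < 1 - p := by linarith
  have hspos : 0 < s := by rw [hs]; exact Real.rpow_pos_of_pos h1p _
  set c : ℝ := Real.log s with hc_def
  have hc : 0 < c := by
    have hlog : Real.log (1 - p) < 0 := Real.log_neg h1p (by linarith)
    have : c = (-T) * Real.log (1 - p) := by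
      rw [hc_def, hs, Real.log_rpow h1p]
    rw [this]
    exact mul_pos_of_neg_of_neg (by linarith) hlog
  have hβ₀pos : 0 < β₀ := by linarith
  -- rewrite f in terms of exp
  have hfe : ∀ β : ℝ, f β = (r + β) * (1 - Real.exp (c * (-1 / β))) / p := by
    intro β
    rw [hf, Real.rpow_def_of_pos hspos]
  -- derivative formula
  have hderiv : ∀ β : ℝ, 0 < β → HasDerivAt f
      ((1 * (1 - Real.exp (c * (-1 / β))) +
        (r + β) * -(Real.exp (c * (-1 / β)) * (c * (β ^ 2)⁻¹))) / p) β := by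
    intro β hβ
    have hβne : β ≠ 0 := ne_of_gt hβ
    have h1 : HasDerivAt (fun b : ℝ => c * (-1 / b)) (c * (β ^ 2)⁻¹) β := by
      have := ((hasDerivAt_inv hβne).neg).const_mul c
      refine (this.congr_deriv (by rw [neg_neg])).congr_of_eventuallyEq ?_
      exact Filter.Eventually.of_forall fun b => by simp only [Pi.neg_apply, neg_div, one_div]
    have h2 := h1.exp
    have h3 := (hasDerivAt_const β (1:ℝ)).sub h2
    have h4 := ((hasDerivAt_id β).const_add r).mul h3
    have h5 := h4.div_const p
    have hfun : f = fun b : ℝ => (r + b) * (1 - Real.exp (c * (-1 / b))) / p :=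
      funext hfe
    rw [hfun]
    exact h5.congr_deriv (by simp only [id, Pi.sub_apply]; ring)
  have hderiv' : ∀ β : ℝ, 0 < β → deriv f β =
      ((1 - Real.exp (c * (-1 / β))) -
        (r + β) * (Real.exp (c * (-1 / β)) * (c / β ^ 2))) / p := by
    intro β hβ
    rw [(hderiv β hβ).deriv]
    field_simp
    ring
  -- sign expression
  set g : ℝ → ℝ := fun x => (Real.exp x - 1 - x) / x ^ 2 with hg_def
  have hsign : ∀ β : ℝ, 0 < β → deriv f β =
      (Real.exp (c * (-1 / β)) / p) * (c / β) ^ 2 * (g (c / β) - r / c) := by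
    intro β hβ
    rw [hderiv' β hβ, hg_def]
    have hβne : β ≠ 0 := ne_of_gt hβ
    have hcne : c ≠ 0 := ne_of_gt hc
    have hpne : p ≠ 0 := ne_of_gt hp0
    have hexp : Real.exp (c * (-1 / β)) = (Real.exp (c / β))⁻¹ := by
      rw [← Real.exp_neg]
      congr 1
      ring
    rw [hexp]
    have hEpos : Real.exp (c / β) ≠ 0 := (Real.exp_pos _).ne'
    field_simp
    ring
  -- critical value
  have hcrit' : g (c / β₀) = r / c := by
    have h0 := hcrit
    rw [hsign β₀ hβ₀pos] at h0
    have hEpos : 0 < Real.exp (c * (-1 / β₀)) / p := div_pos (Real.exp_pos _) hp0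
    have hx2 : (0:ℝ) < (c / β₀) ^ 2 := by positivity
    have := mul_eq_zero.mp h0
    rcases this with h | h
    · exact absurd h (ne_of_gt (mul_pos hEpos hx2))
    · linarith [h]
  constructor
  · apply monotoneOn_of_deriv_nonneg (convex_Icc 1 β₀)
    · intro x hx
      have hxpos : 0 < x := lt_of_lt_of_le one_pos hx.1
      exact ((hderiv x hxpos).differentiableAt).continuousAt.continuousWithinAt
    · intro x hx
      rw [interior_Icc] at hx
      have hxpos : 0 < x := lt_trans one_pos hx.1
      exact ((hderiv x hxpos).differentiableAt).differentiableWithinAt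
    · intro x hx
      rw [interior_Icc] at hx
      have hxpos : 0 < x := lt_trans one_pos hx.1
      rw [hsign x hxpos]
      have hlt : c / β₀ < c / x := by
        apply div_lt_div_of_pos_left hc hxpos hx.2
      have hmem1 : c / β₀ ∈ Set.Ioi (0:ℝ) := div_pos hc hβ₀pos
      have hmem2 : c / x ∈ Set.Ioi (0:ℝ) := div_pos hc hxpos
      have hgx : g (c / β₀) < g (c / x) := ace_aux_g_mono hmem1 hmem2 hlt
      rw [hcrit'] at hgx
      have hEpos : 0 < Real.exp (c * (-1 / x)) / p := div_pos (Real.exp_pos _) hp0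
      have hx2 : (0:ℝ) < (c / x) ^ 2 := by positivity
      exact mul_nonneg (le_of_lt (mul_pos hEpos hx2)) (by linarith)
  · apply antitoneOn_of_deriv_nonpos (convex_Icc β₀ T)
    · intro x hx
      have hxpos : 0 < x := lt_of_lt_of_le hβ₀pos hx.1
      exact ((hderiv x hxpos).differentiableAt).continuousAt.continuousWithinAt
    · intro x hx
      rw [interior_Icc] at hx
      have hxpos : 0 < x := lt_trans hβ₀pos hx.1
      exact ((hderiv x hxpos).differentiableAt).differentiableWithinAt
    · intro x hx
      rw [interior_Icc] at hx
      have hxpos : 0 < x := lt_trans hβ₀pos hx.1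
      rw [hsign x hxpos]
      have hlt : c / x < c / β₀ := by
        apply div_lt_div_of_pos_left hc hβ₀pos hx.1
      have hmem1 : c / β₀ ∈ Set.Ioi (0:ℝ) := div_pos hc hβ₀pos
      have hmem2 : c / x ∈ Set.Ioi (0:ℝ) := div_pos hc hxpos
      have hgx : g (c / x) < g (c / β₀) := ace_aux_g_mono hmem2 hmem1 hlt
      rw [hcrit'] at hgx
      apply mul_nonpos_of_nonneg_of_nonpos
      · positivity
      · linarith
end
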